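/- In BCB with public budgets (players must budget-bid their true budgets), consider three slots θ1 > θ2 > θ3 > 0 and four players with distinct budgets B1 > B2 > B3 > B4, with the twelve values p_i^j = B_i/θ_j pairwise distinct and satisfying p_4^1 < p_3^1 < p_2^1 < p_1^1 < p_4^2 < p_3^2 < p_2^2 < p_1^2 < p_4^3 < p_3^3 < p_2^3 < p_1^3, all valuations exceeding p_1^3, and ties resolved by budget order. Then no Nash equilibrium in value-bids exists. -/

import Mathlib

/-- The bid (or other attribute) of the player occupying rank `r` in the ordering `π`
(rank `0` is the highest bidder); `0` for out-of-range ranks. -/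
noncomputable def rankVal {n : ℕ} (f : Fin n → ℝ) (π : Equiv.Perm (Fin n)) (r : ℕ) : ℝ :=
  if h : r < n then f (π ⟨r, h⟩) else 0

/-- `π` lists the players in decreasing order of their bids `b`,
breaking ties according to the fixed priority order `prio` (lower `prio` = higher priority). -/
def IsBidOrder {n : ℕ} (b : Fin n → ℝ) (prio : Fin n → ℕ) (π : Equiv.Perm (Fin n)) : Prop :=
  ∀ r r' : Fin n, r < r' →
    b (π r) > b (π r') ∨ (b (π r) = b (π r') ∧ prio (π r) < prio (π r'))

/-- BCB: like BCP, but a player may only take a slot that he could afford were he to pay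
his *own* value-bid `rb r`. -/
noncomputable def bcbAvail {k : ℕ} (θ : Fin k → ℝ) (rb rg : ℕ → ℝ) : ℕ → Finset (Fin k)
  | 0 => Finset.univ
  | r + 1 =>
    let F := (bcbAvail θ rb rg r).filter fun s => θ s * rb r ≤ rg r
    if h : F.Nonempty then (bcbAvail θ rb rg r).erase (F.min' h) else bcbAvail θ rb rg r

/-- BCB: the slot assigned to the player of rank `r` (or `none`). -/
noncomputable def bcbSlot {k : ℕ} (θ : Fin k → ℝ) (rb rg : ℕ → ℝ) (r : ℕ) : Option (Fin k) :=
  let F := (bcbAvail θ rb rg r).filter fun s => θ s * rb r ≤ rg r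
  if h : F.Nonempty then some (F.min' h) else none

/-- Utility of player `i` under BCB. -/
noncomputable def bcbUtil {n k : ℕ} (θ : Fin k → ℝ) (v B b g : Fin n → ℝ)
    (π : Equiv.Perm (Fin n)) (i : Fin n) : EReal :=
  let r := (π.symm i : ℕ)
  let p := rankVal b π (r + 1)
  match bcbSlot θ (rankVal b π) (rankVal g π) r with
  | none => 0
  | some s => if θ s * p ≤ B i then ((θ s * (v i - p) : ℝ) : EReal) else ⊥

namespace BCBNoNash

lemma avail_zero {k : ℕ} (θ : Fin k → ℝ) (rb rg : ℕ → ℝ) :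
    bcbAvail θ rb rg 0 = Finset.univ := rfl

lemma slot_def {k : ℕ} (θ : Fin k → ℝ) (rb rg : ℕ → ℝ) (r : ℕ) :
    bcbSlot θ rb rg r =
      if h : ((bcbAvail θ rb rg r).filter fun s => θ s * rb r ≤ rg r).Nonempty
      then some (((bcbAvail θ rb rg r).filter fun s => θ s * rb r ≤ rg r).min' h)
      else none := rfl

lemma avail_succ {k : ℕ} (θ : Fin k → ℝ) (rb rg : ℕ → ℝ) (r : ℕ) :
    bcbAvail θ rb rg (r+1) =
      if h : ((bcbAvail θ rb rg r).filter fun s => θ s * rb r ≤ rg r).Nonempty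
      then (bcbAvail θ rb rg r).erase
        (((bcbAvail θ rb rg r).filter fun s => θ s * rb r ≤ rg r).min' h)
      else bcbAvail θ rb rg r := by
  rw [bcbAvail]

lemma avail_succ_of_none {k : ℕ} {θ : Fin k → ℝ} {rb rg : ℕ → ℝ} {r : ℕ}
    (h : bcbSlot θ rb rg r = none) :
    bcbAvail θ rb rg (r+1) = bcbAvail θ rb rg r := by
  rw [slot_def] at h
  rw [avail_succ]
  by_cases hne : ((bcbAvail θ rb rg r).filter fun s => θ s * rb r ≤ rg r).Nonempty
  · rw [dif_pos hne] at h; cases h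
  · rw [dif_neg hne]

lemma avail_succ_of_some {k : ℕ} {θ : Fin k → ℝ} {rb rg : ℕ → ℝ} {r : ℕ} {s : Fin k}
    (h : bcbSlot θ rb rg r = some s) :
    bcbAvail θ rb rg (r+1) = (bcbAvail θ rb rg r).erase s := by
  rw [slot_def] at h
  rw [avail_succ]
  by_cases hne : ((bcbAvail θ rb rg r).filter fun s => θ s * rb r ≤ rg r).Nonempty
  · rw [dif_pos hne] at h
    rw [Option.some.injEq] at h
    rw [dif_pos hne, h]
  · rw [dif_neg hne] at h; cases h

lemma slot_none_iff {k : ℕ} {θ : Fin k → ℝ} {rb rg : ℕ → ℝ} {r : ℕ} :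
    bcbSlot θ rb rg r = none ↔ ∀ s ∈ bcbAvail θ rb rg r, ¬ (θ s * rb r ≤ rg r) := by
  rw [slot_def]
  by_cases hne : ((bcbAvail θ rb rg r).filter fun s => θ s * rb r ≤ rg r).Nonempty
  · rw [dif_pos hne]
    simp only [reduceCtorEq, false_iff, not_forall]
    obtain ⟨s, hs⟩ := hne
    rw [Finset.mem_filter] at hs
    exact ⟨s, hs.1, by simpa using hs.2⟩
  · rw [dif_neg hne]
    simp only [true_iff]
    intro s hs hle
    exact hne ⟨s, Finset.mem_filter.2 ⟨hs, hle⟩⟩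

lemma slot_spec {k : ℕ} {θ : Fin k → ℝ} {rb rg : ℕ → ℝ} {r : ℕ} {s : Fin k}
    (h : bcbSlot θ rb rg r = some s) :
    s ∈ bcbAvail θ rb rg r ∧ (θ s * rb r ≤ rg r) ∧
      ∀ s' ∈ bcbAvail θ rb rg r, θ s' * rb r ≤ rg r → s ≤ s' := by
  rw [slot_def] at h
  by_cases hne : ((bcbAvail θ rb rg r).filter fun s => θ s * rb r ≤ rg r).Nonempty
  · rw [dif_pos hne, Option.some.injEq] at h
    subst h
    have hmem := Finset.min'_mem _ hne
    rw [Finset.mem_filter] at hmem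
    exact ⟨hmem.1, hmem.2, fun s' h1 h2 =>
      Finset.min'_le _ _ (Finset.mem_filter.2 ⟨h1, h2⟩)⟩
  · rw [dif_neg hne] at h; cases h

lemma slot_eq_some {k : ℕ} {θ : Fin k → ℝ} {rb rg : ℕ → ℝ} {r : ℕ} {s : Fin k}
    (h1 : s ∈ bcbAvail θ rb rg r) (h2 : θ s * rb r ≤ rg r)
    (h3 : ∀ s' ∈ bcbAvail θ rb rg r, θ s' * rb r ≤ rg r → s ≤ s') :
    bcbSlot θ rb rg r = some s := by
  have hne : ((bcbAvail θ rb rg r).filter fun s => θ s * rb r ≤ rg r).Nonempty :=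
    ⟨s, Finset.mem_filter.2 ⟨h1, h2⟩⟩
  rw [slot_def, dif_pos hne, Option.some.injEq]
  have hmem := Finset.min'_mem _ hne
  rw [Finset.mem_filter] at hmem
  exact le_antisymm (Finset.min'_le _ _ (Finset.mem_filter.2 ⟨h1, h2⟩))
    (h3 _ hmem.1 hmem.2)

lemma avail_congr {k : ℕ} {θ : Fin k → ℝ} {rb rg rb' rg' : ℕ → ℝ} :
    ∀ {r : ℕ}, (∀ m < r, rb m = rb' m) → (∀ m < r, rg m = rg' m) →
    bcbAvail θ rb rg r = bcbAvail θ rb' rg' r := by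
  intro r
  induction r with
  | zero => intro _ _; rfl
  | succ n ih =>
    intro hu hg
    rw [avail_succ, avail_succ,
      ih (fun m hm => hu m (by omega)) (fun m hm => hg m (by omega)),
      hu n (by omega), hg n (by omega)]

lemma slot_congr {k : ℕ} {θ : Fin k → ℝ} {rb rg rb' rg' : ℕ → ℝ} {r : ℕ}
    (hu : ∀ m ≤ r, rb m = rb' m) (hg : ∀ m ≤ r, rg m = rg' m) :
    bcbSlot θ rb rg r = bcbSlot θ rb' rg' r := by
  rw [slot_def, slot_def,
    avail_congr (fun m hm => hu m (by omega)) (fun m hm => hg m (by omega)),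
    hu r le_rfl, hg r le_rfl]

lemma util_none {n k : ℕ} (θ : Fin k → ℝ) (v B b g : Fin n → ℝ) (π : Equiv.Perm (Fin n))
    (i : Fin n) (h : bcbSlot θ (rankVal b π) (rankVal g π) ((π.symm i : ℕ)) = none) :
    bcbUtil θ v B b g π i = 0 := by
  simp only [bcbUtil, h]

lemma util_some {n k : ℕ} (θ : Fin k → ℝ) (v B b g : Fin n → ℝ) (π : Equiv.Perm (Fin n))
    (i : Fin n) (s : Fin k)
    (h : bcbSlot θ (rankVal b π) (rankVal g π) ((π.symm i : ℕ)) = some s) :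
    bcbUtil θ v B b g π i =
      if θ s * rankVal b π ((π.symm i : ℕ) + 1) ≤ B i
      then ((θ s * (v i - rankVal b π ((π.symm i : ℕ) + 1)) : ℝ) : EReal) else ⊥ := by
  simp only [bcbUtil, h]

lemma reord {n : ℕ} (b : Fin (n+1) → ℝ) (π : Equiv.Perm (Fin (n+1)))
    (hord : IsBidOrder b (fun i => (i : ℕ)) π) (ρ j' : Fin (n+1)) (x : ℝ)
    (hhi : ∀ m : Fin n, j'.succAbove m < j' → b (π (ρ.succAbove m)) > x)
    (hlo : ∀ m : Fin n, j' < j'.succAbove m → x > b (π (ρ.succAbove m))) :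
    ∃ π' : Equiv.Perm (Fin (n+1)),
      IsBidOrder (Function.update b (π ρ) x) (fun i => (i : ℕ)) π' ∧
      π' j' = π ρ ∧ ∀ m : Fin n, π' (j'.succAbove m) = π (ρ.succAbove m) := by
  refine ⟨(j'.cycleRange.trans ρ.cycleRange.symm).trans π, ?_, ?_, ?_⟩
  · -- IsBidOrder
    have hj : ((j'.cycleRange.trans ρ.cycleRange.symm).trans π) j' = π ρ := by
      simp [Equiv.trans_apply, Fin.cycleRange_self, Fin.cycleRange_symm_zero]
    have hm : ∀ m : Fin n,
        ((j'.cycleRange.trans ρ.cycleRange.symm).trans π) (j'.succAbove m) =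
          π (ρ.succAbove m) := by
      intro m
      simp [Equiv.trans_apply, Fin.cycleRange_succAbove, Fin.cycleRange_symm_succ]
    intro r r' hrr
    by_cases hr : r = j'
    · by_cases hr' : r' = j'
      · rw [hr, hr'] at hrr
        exact absurd hrr (lt_irrefl _)
      · obtain ⟨m', hm'⟩ := Fin.exists_succAbove_eq hr'
        left
        rw [hr, ← hm'] at hrr ⊢
        rw [hj, hm, Function.update_self,
          Function.update_of_ne (fun h => Fin.succAbove_ne ρ m' (π.injective h)) _ _]
        exact hlo m' hrr
    · obtain ⟨m, hmeq⟩ := Fin.exists_succAbove_eq hr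
      by_cases hr' : r' = j'
      · left
        rw [← hmeq, hr'] at hrr ⊢
        rw [hj, hm, Function.update_self,
          Function.update_of_ne (fun h => Fin.succAbove_ne ρ m (π.injective h)) _ _]
        exact hhi m hrr
      · obtain ⟨m', hmeq'⟩ := Fin.exists_succAbove_eq hr'
        rw [← hmeq, ← hmeq'] at hrr ⊢
        have hmm : m < m' := by
          rwa [Fin.succAbove_lt_succAbove_iff] at hrr
        have := hord (ρ.succAbove m) (ρ.succAbove m')
          (Fin.succAbove_lt_succAbove_iff.2 hmm)
        rw [hm, hm,
          Function.update_of_ne (fun h => Fin.succAbove_ne ρ m (π.injective h)) _ _,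
          Function.update_of_ne (fun h => Fin.succAbove_ne ρ m' (π.injective h)) _ _]
        exact this
  · simp [Equiv.trans_apply, Fin.cycleRange_self, Fin.cycleRange_symm_zero]
  · intro m
    simp [Equiv.trans_apply, Fin.cycleRange_succAbove, Fin.cycleRange_symm_succ]


lemma rv4 {f : Fin 4 → ℝ} {σ : Equiv.Perm (Fin 4)} :
    rankVal f σ 0 = f (σ 0) ∧ rankVal f σ 1 = f (σ 1) ∧ rankVal f σ 2 = f (σ 2) ∧
      rankVal f σ 3 = f (σ 3) ∧ rankVal f σ 4 = 0 :=
  ⟨rfl, rfl, rfl, rfl, rfl⟩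

lemma card_avail_succ {k : ℕ} (θ : Fin k → ℝ) (rb rg : ℕ → ℝ) (r : ℕ) :
    (bcbAvail θ rb rg r).card ≤ (bcbAvail θ rb rg (r+1)).card + 1 := by
  rw [avail_succ]
  split_ifs with h
  · have := Finset.pred_card_le_card_erase
      (s := bcbAvail θ rb rg r)
      (a := ((bcbAvail θ rb rg r).filter fun s => θ s * rb r ≤ rg r).min' h)
    omega
  · omega

lemma fin3cases : ∀ s : Fin 3, s = 0 ∨ s = 1 ∨ s = 2 := by decide

lemma fin4cases : ∀ s : Fin 4, s = 0 ∨ s = 1 ∨ s = 2 ∨ s = 3 := by decide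

lemma not_coe_le_bot (x : ℝ) : ¬ ((x : EReal) ≤ ⊥) := by
  simp

end BCBNoNash

set_option maxHeartbeats 1000000 in
open BCBNoNash in
/-- BCB with public budgets (budget-bids forced equal to the true budgets `B`): with three
slots of CTRs `θ 0 > θ 1 > θ 2 > 0`, four players of distinct budgets `B 0 > B 1 > B 2 > B 3`
whose twelve values `B i / θ j` are pairwise distinct and chained as in the counterexample,
all valuations exceeding `B 0 / θ 2`, and ties resolved by budget order, no Nash
equilibrium in the value-bids exists. -/
theorem bcb_public_budgets_no_nash
    (θ : Fin 3 → ℝ) (B : Fin 4 → ℝ) (v : Fin 4 → ℝ)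
    (hθpos : ∀ j, 0 < θ j) (hθ : StrictAnti θ)
    (hBpos : ∀ i, 0 < B i) (hB : StrictAnti B)
    -- the twelve values B i / θ j are ordered as in the counterexample:
    (hchain : B 3 / θ 0 < B 2 / θ 0 ∧ B 2 / θ 0 < B 1 / θ 0 ∧ B 1 / θ 0 < B 0 / θ 0 ∧
      B 0 / θ 0 < B 3 / θ 1 ∧ B 3 / θ 1 < B 2 / θ 1 ∧ B 2 / θ 1 < B 1 / θ 1 ∧
      B 1 / θ 1 < B 0 / θ 1 ∧ B 0 / θ 1 < B 3 / θ 2 ∧ B 3 / θ 2 < B 2 / θ 2 ∧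
      B 2 / θ 2 < B 1 / θ 2 ∧ B 1 / θ 2 < B 0 / θ 2)
    -- all valuations exceed B 0 / θ 2:
    (hv : ∀ i, B 0 / θ 2 < v i) :
    ¬ ∃ (b : Fin 4 → ℝ) (π : Equiv.Perm (Fin 4)),
      IsBidOrder b (fun i => (i : ℕ)) π ∧
      ∀ (i : Fin 4) (b' : ℝ) (π' : Equiv.Perm (Fin 4)),
        IsBidOrder (Function.update b i b') (fun i => (i : ℕ)) π' →
        bcbUtil θ v B (Function.update b i b') B π' i ≤ bcbUtil θ v B b B π i := by
  rintro ⟨b, π, hord, hNE⟩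
  -- ===== S0: basic numeric facts =====
  have hθ0 := hθpos 0
  have hθ1 := hθpos 1
  have hθ2 := hθpos 2
  have hθ01 : θ 1 < θ 0 := hθ (show (0:Fin 3) < 1 by decide)
  have hθ12 : θ 2 < θ 1 := hθ (show (1:Fin 3) < 2 by decide)
  obtain ⟨hc1, hc2, hc3, hc4, hc5, hc6, hc7, hc8, hc9, hc10, hc11⟩ := hchain
  have K1 : B 0 * θ 1 < B 3 * θ 0 := (div_lt_div_iff₀ hθ0 hθ1).1 hc4
  have K2 : B 0 * θ 2 < B 3 * θ 1 := (div_lt_div_iff₀ hθ1 hθ2).1 hc8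
  have K3 : B 0 * θ 2 < B 3 * θ 0 := by nlinarith [mul_lt_mul_of_pos_left hθ01 (hBpos 3)]
  have Kv : ∀ i, B 0 < v i * θ 2 := fun i => (div_lt_iff₀ hθ2).1 (hv i)
  have Kvpos : ∀ i, 0 < v i := by
    intro i
    nlinarith [Kv i, hBpos 0]
  have hθs2 : ∀ s : Fin 3, θ 2 ≤ θ s := fun s => hθ.antitone (Fin.le_last s)
  -- ===== S1: an unassigned rank exists =====
  obtain ⟨ρ, hρ⟩ : ∃ ρ : Fin 4, bcbSlot θ (rankVal b π) (rankVal B π) ((ρ : Fin 4) : ℕ) = none := by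
    cases h0 : bcbSlot θ (rankVal b π) (rankVal B π) 0 with
    | none => exact ⟨0, h0⟩
    | some s0 =>
      cases h1 : bcbSlot θ (rankVal b π) (rankVal B π) 1 with
      | none => exact ⟨1, h1⟩
      | some s1 =>
        cases h2 : bcbSlot θ (rankVal b π) (rankVal B π) 2 with
        | none => exact ⟨2, h2⟩
        | some s2 =>
          refine ⟨3, ?_⟩
          have e1 := avail_succ_of_some h0
          have e2 := avail_succ_of_some h1
          have e3 := avail_succ_of_some h2
          have m0 := (slot_spec h0).1
          have m1 := (slot_spec h1).1
          have m2 := (slot_spec h2).1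
          have hcard : (bcbAvail θ (rankVal b π) (rankVal B π) 3).card = 0 := by
            rw [e3, Finset.card_erase_of_mem m2, e2, Finset.card_erase_of_mem m1, e1,
              Finset.card_erase_of_mem m0, avail_zero]
            simp
          rw [Finset.card_eq_zero] at hcard
          rw [slot_none_iff]
          intro s hs
          rw [show ((3 : Fin 4) : ℕ) = 3 from rfl, hcard] at hs
          exact absurd hs (Finset.notMem_empty s)
  -- ===== S2: the other three players in order =====
  obtain ⟨Q, hQ⟩ : ∃ Q : Fin 3 → Fin 4, ∀ m, Q m = π (ρ.succAbove m) := ⟨_, fun _ => rfl⟩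
  obtain ⟨c, hc⟩ : ∃ c : Fin 3 → ℝ, ∀ m, c m = b (Q m) := ⟨_, fun _ => rfl⟩
  obtain ⟨gQ, hg⟩ : ∃ gQ : Fin 3 → ℝ, ∀ m, gQ m = B (Q m) := ⟨_, fun _ => rfl⟩
  have hQz : ∀ m, Q m ≠ π ρ := fun m h => Fin.succAbove_ne ρ m (π.injective (hQ m ▸ h))
  have hQinj : ∀ m m' : Fin 3, m ≠ m' → Q m ≠ Q m' := by
    intro m m' hne h
    rw [hQ m, hQ m'] at h
    exact hne (Fin.succAbove_right_injective (π.injective h))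
  have pairLe : ∀ m m' : Fin 3, m < m' → c m' ≤ c m := by
    intro m m' hmm
    rcases hord (ρ.succAbove m) (ρ.succAbove m') (Fin.succAbove_lt_succAbove_iff.2 hmm) with h | ⟨h, _⟩
    · rw [hc m, hc m', hQ m, hQ m']; exact le_of_lt h
    · rw [hc m, hc m', hQ m, hQ m']; exact le_of_eq h.symm
  have hgB0 : ∀ m, gQ m ≤ B 0 := fun m => by rw [hg]; exact hB.antitone (Fin.zero_le _)
  have hB3g : ∀ m, B 3 ≤ gQ m := fun m => by rw [hg]; exact hB.antitone (Fin.le_last _)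
  have hB3z : B 3 ≤ B (π ρ) := hB.antitone (Fin.le_last _)
  have hBz0 : B (π ρ) ≤ B 0 := hB.antitone (Fin.zero_le _)
  -- alone-run sequences
  obtain ⟨ca, hca0, hca1, hca2⟩ :
      ∃ ca : ℕ → ℝ, ca 0 = c 0 ∧ ca 1 = c 1 ∧ ca 2 = c 2 :=
    ⟨fun k => if h : k < 3 then c ⟨k, h⟩ else 0, rfl, rfl, rfl⟩
  obtain ⟨ga, hga0, hga1, hga2⟩ :
      ∃ ga : ℕ → ℝ, ga 0 = gQ 0 ∧ ga 1 = gQ 1 ∧ ga 2 = gQ 2 :=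
    ⟨fun k => if h : k < 3 then gQ ⟨k, h⟩ else 0, rfl, rfl, rfl⟩
  -- ===== S3: low bid, orig utility of the unassigned player =====
  obtain ⟨blo, hblo0, hbloB⟩ : ∃ blo : ℝ, blo < 0 ∧ ∀ r : Fin 4, blo < b (π r) := by
    refine ⟨min (min (b (π 0)) (min (b (π 1)) (min (b (π 2)) (b (π 3))))) 0 - 1, ?_, ?_⟩
    · have := min_le_right (min (b (π 0)) (min (b (π 1)) (min (b (π 2)) (b (π 3))))) (0:ℝ)
      linarith
    · intro r
      have h1 := min_le_left (b (π 0)) (min (b (π 1)) (min (b (π 2)) (b (π 3))))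
      have h2 := min_le_left (b (π 1)) (min (b (π 2)) (b (π 3)))
      have h3 := min_le_left (b (π 2)) (b (π 3))
      have h4 := min_le_right (b (π 2)) (b (π 3))
      have h5 := min_le_right (b (π 1)) (min (b (π 2)) (b (π 3)))
      have h0 := min_le_left (min (b (π 0)) (min (b (π 1)) (min (b (π 2)) (b (π 3))))) (0:ℝ)
      have h6 := min_le_right (b (π 0)) (min (b (π 1)) (min (b (π 2)) (b (π 3))))
      rcases fin4cases r with rfl | rfl | rfl | rfl <;> linarith
  have hsymz : ((π.symm (π ρ) : Fin 4) : ℕ) = ((ρ : Fin 4) : ℕ) := by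
    rw [Equiv.symm_apply_apply]
  have hUz : bcbUtil θ v B b B π (π ρ) = 0 :=
    util_none θ v B b B π (π ρ) (by rw [hsymz]; exact hρ)

  have h3s : ∀ m : Fin 3, ¬ ((3:Fin 4) < (3:Fin 4).succAbove m) := by decide
  have e30 : (3:Fin 4).succAbove 0 = 0 := by decide
  have e31 : (3:Fin 4).succAbove 1 = 1 := by decide
  have e32 : (3:Fin 4).succAbove 2 = 2 := by decide
  -- ===== S4: the alone-run assigns all three slots =====
  have hAR3 : bcbAvail θ ca ga 3 = ∅ := by
    by_contra hne0
    obtain ⟨s3, hs3⟩ := Finset.nonempty_of_ne_empty hne0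
    obtain ⟨π', hord', hπj, hπm⟩ := reord b π hord ρ 3 blo
      (fun m _ => hbloB (ρ.succAbove m))
      (fun m hm => absurd hm (h3s m))
    have hp0 : π' 0 = Q 0 := by rw [← e30, hπm 0, ← hQ 0]
    have hp1 : π' 1 = Q 1 := by rw [← e31, hπm 1, ← hQ 1]
    have hp2 : π' 2 = Q 2 := by rw [← e32, hπm 2, ← hQ 2]
    have u0 : rankVal (Function.update b (π ρ) blo) π' 0 = ca 0 := by
      rw [rv4.1, hp0, Function.update_of_ne (hQz 0), hca0, hc 0]
    have u1 : rankVal (Function.update b (π ρ) blo) π' 1 = ca 1 := by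
      rw [rv4.2.1, hp1, Function.update_of_ne (hQz 1), hca1, hc 1]
    have u2 : rankVal (Function.update b (π ρ) blo) π' 2 = ca 2 := by
      rw [rv4.2.2.1, hp2, Function.update_of_ne (hQz 2), hca2, hc 2]
    have w0 : rankVal B π' 0 = ga 0 := by rw [rv4.1, hp0, hga0, hg 0]
    have w1 : rankVal B π' 1 = ga 1 := by rw [rv4.2.1, hp1, hga1, hg 1]
    have w2 : rankVal B π' 2 = ga 2 := by rw [rv4.2.2.1, hp2, hga2, hg 2]
    have hpre : bcbAvail θ (rankVal (Function.update b (π ρ) blo) π') (rankVal B π') 3 =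
        bcbAvail θ ca ga 3 := by
      refine avail_congr (fun m hm => ?_) (fun m hm => ?_)
      · interval_cases m
        exacts [u0, u1, u2]
      · interval_cases m
        exacts [w0, w1, w2]
    have u3 : rankVal (Function.update b (π ρ) blo) π' 3 = blo := by
      rw [rv4.2.2.2.1, hπj, Function.update_self]
    have w3 : rankVal B π' 3 = B (π ρ) := by rw [rv4.2.2.2.1, hπj]
    have hFne : ((bcbAvail θ (rankVal (Function.update b (π ρ) blo) π') (rankVal B π') 3).filter
        fun s => θ s * rankVal (Function.update b (π ρ) blo) π' 3 ≤ rankVal B π' 3).Nonempty := by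
      refine ⟨s3, Finset.mem_filter.2 ⟨by rw [hpre]; exact hs3, ?_⟩⟩
      rw [u3, w3]
      exact le_of_lt (lt_trans (mul_neg_of_pos_of_neg (hθpos s3) hblo0) (hBpos _))
    have hslot : bcbSlot θ (rankVal (Function.update b (π ρ) blo) π') (rankVal B π') 3 =
        some (((bcbAvail θ (rankVal (Function.update b (π ρ) blo) π') (rankVal B π') 3).filter
        fun s => θ s * rankVal (Function.update b (π ρ) blo) π' 3 ≤ rankVal B π' 3).min' hFne) := by
      rw [slot_def, dif_pos hFne]
    have hsymn : ((π'.symm (π ρ) : Fin 4) : ℕ) = 3 := by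
      rw [← hπj, Equiv.symm_apply_apply]
      rfl
    have hU := util_some θ v B (Function.update b (π ρ) blo) B π' (π ρ) _
      (by rw [hsymn]; exact hslot)
    rw [hsymn, show (3:ℕ)+1 = 4 from rfl, rv4.2.2.2.2] at hU
    have hbud : θ (((bcbAvail θ (rankVal (Function.update b (π ρ) blo) π') (rankVal B π') 3).filter
        fun s => θ s * rankVal (Function.update b (π ρ) blo) π' 3 ≤ rankVal B π' 3).min' hFne) * 0
        ≤ B (π ρ) := by
      rw [mul_zero]
      exact (hBpos (π ρ)).le
    rw [if_pos hbud] at hU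
    have hcontra := hNE (π ρ) blo π' hord'
    rw [hU, hUz, ← EReal.coe_zero, EReal.coe_le_coe_iff] at hcontra
    nlinarith [mul_pos (hθpos (((bcbAvail θ (rankVal (Function.update b (π ρ) blo) π')
      (rankVal B π') 3).filter fun s => θ s * rankVal (Function.update b (π ρ) blo) π' 3
      ≤ rankVal B π' 3).min' hFne)) (Kvpos (π ρ))]
  -- ===== S5: alone-run slots =====
  have cs0 : (bcbAvail θ ca ga 0).card ≤ (bcbAvail θ ca ga 1).card + 1 :=
    card_avail_succ θ ca ga 0
  have cs1 : (bcbAvail θ ca ga 1).card ≤ (bcbAvail θ ca ga 2).card + 1 :=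
    card_avail_succ θ ca ga 1
  have cs2 : (bcbAvail θ ca ga 2).card ≤ (bcbAvail θ ca ga 3).card + 1 :=
    card_avail_succ θ ca ga 2
  have hcard0 : (bcbAvail θ ca ga 0).card = 3 := by
    rw [avail_zero]
    simp
  have hcard3 : (bcbAvail θ ca ga 3).card = 0 := by rw [hAR3]; rfl
  obtain ⟨σ0, hσ0s⟩ : ∃ s, bcbSlot θ ca ga 0 = some s := by
    cases h : bcbSlot θ ca ga 0 with
    | some s => exact ⟨s, rfl⟩
    | none =>
      have e := avail_succ_of_none h
      have : (bcbAvail θ ca ga 1).card = 3 := by rw [e, hcard0]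
      omega
  obtain ⟨σ1, hσ1s⟩ : ∃ s, bcbSlot θ ca ga 1 = some s := by
    cases h : bcbSlot θ ca ga 1 with
    | some s => exact ⟨s, rfl⟩
    | none =>
      have e := avail_succ_of_none h
      have : (bcbAvail θ ca ga 2).card = (bcbAvail θ ca ga 1).card := by rw [e]
      omega
  obtain ⟨σ2, hσ2s⟩ : ∃ s, bcbSlot θ ca ga 2 = some s := by
    cases h : bcbSlot θ ca ga 2 with
    | some s => exact ⟨s, rfl⟩
    | none =>
      have e := avail_succ_of_none h
      have : (bcbAvail θ ca ga 3).card = (bcbAvail θ ca ga 2).card := by rw [e]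
      omega
  have hA1e : bcbAvail θ ca ga 1 = Finset.univ.erase σ0 := by
    rw [avail_succ_of_some hσ0s, avail_zero]
  have hA2e : bcbAvail θ ca ga 2 = (Finset.univ.erase σ0).erase σ1 := by
    rw [avail_succ_of_some hσ1s, hA1e]
  obtain ⟨mem0, aff0, min0⟩ := slot_spec hσ0s
  obtain ⟨mem1, aff1, min1⟩ := slot_spec hσ1s
  obtain ⟨mem2, aff2, min2⟩ := slot_spec hσ2s
  rw [hca0, hga0] at aff0 min0
  rw [hca1, hga1] at aff1 min1
  rw [hca2, hga2] at aff2 min2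
  -- prices are below all valuations
  have hcv : ∀ (m : Fin 3) (sm : Fin 3), θ sm * c m ≤ gQ m → ∀ i, c m < v i := by
    intro m sm hle i
    rcases le_or_gt (c m) 0 with h | h
    · linarith [Kvpos i]
    · have h2 : θ 2 * c m < θ 2 * v i := by
        linarith [Kv i, hgB0 m, mul_le_mul_of_nonneg_right (hθs2 sm) h.le]
      exact lt_of_mul_lt_mul_left h2 hθ2.le
  have hcv0 : ∀ i, c 0 < v i := hcv 0 σ0 aff0
  have hcv1 : ∀ i, c 1 < v i := hcv 1 σ1 aff1
  have hcv2 : ∀ i, c 2 < v i := hcv 2 σ2 aff2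

  -- ===== S7: insertion deviations for the unassigned player =====
  have e00 : (0:Fin 4).succAbove 0 = 1 := by decide
  have e01 : (0:Fin 4).succAbove 1 = 2 := by decide
  have e02 : (0:Fin 4).succAbove 2 = 3 := by decide
  have e10 : (1:Fin 4).succAbove 0 = 0 := by decide
  have e11 : (1:Fin 4).succAbove 1 = 2 := by decide
  have e12 : (1:Fin 4).succAbove 2 = 3 := by decide
  have e20 : (2:Fin 4).succAbove 0 = 0 := by decide
  have e21 : (2:Fin 4).succAbove 1 = 1 := by decide
  have e22 : (2:Fin 4).succAbove 2 = 3 := by decide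
  have Dev0 : ∀ x : ℝ, (∀ m : Fin 3, c m < x) → (∃ s : Fin 3, θ s * x ≤ B (π ρ)) → False := by
    rintro x hx ⟨s, hs⟩
    obtain ⟨π', hord', hπj, hπm⟩ := reord b π hord ρ 0 x
      (fun m hm => absurd hm (Fin.not_lt_zero _))
      (fun m _ => by rw [← hQ m, ← hc m]; exact hx m)
    have hp1 : π' 1 = Q 0 := by rw [← e00, hπm 0, ← hQ 0]
    have u0 : rankVal (Function.update b (π ρ) x) π' 0 = x := by
      rw [rv4.1, hπj, Function.update_self]
    have w0 : rankVal B π' 0 = B (π ρ) := by rw [rv4.1, hπj]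
    have u1 : rankVal (Function.update b (π ρ) x) π' 1 = c 0 := by
      rw [rv4.2.1, hp1, Function.update_of_ne (hQz 0), hc 0]
    have hFne : ((bcbAvail θ (rankVal (Function.update b (π ρ) x) π') (rankVal B π') 0).filter
        fun s => θ s * rankVal (Function.update b (π ρ) x) π' 0 ≤ rankVal B π' 0).Nonempty := by
      refine ⟨s, Finset.mem_filter.2 ⟨by rw [avail_zero]; exact Finset.mem_univ s, ?_⟩⟩
      rw [u0, w0]
      exact hs
    set s' := ((bcbAvail θ (rankVal (Function.update b (π ρ) x) π') (rankVal B π') 0).filter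
        fun s => θ s * rankVal (Function.update b (π ρ) x) π' 0 ≤ rankVal B π' 0).min' hFne
      with hs'def
    have hslot : bcbSlot θ (rankVal (Function.update b (π ρ) x) π') (rankVal B π') 0 =
        some s' := by
      rw [slot_def, dif_pos hFne]
    have hmin := Finset.min'_mem _ hFne
    rw [← hs'def, Finset.mem_filter] at hmin
    have haff : θ s' * x ≤ B (π ρ) := by
      rw [← u0, ← w0]
      exact hmin.2
    have hsymn : ((π'.symm (π ρ) : Fin 4) : ℕ) = 0 := by
      rw [← hπj, Equiv.symm_apply_apply]
      rfl
    clear_value s'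
    have hU := util_some θ v B (Function.update b (π ρ) x) B π' (π ρ) _
      (by rw [hsymn]; exact hslot)
    have upr : rankVal (Function.update b (π ρ) x) π' (((π'.symm (π ρ) : Fin 4) : ℕ) + 1) =
        c 0 := by
      rw [hsymn]
      exact u1
    rw [upr] at hU
    have hbud : θ s' * c 0 ≤ B (π ρ) :=
      le_trans (mul_le_mul_of_nonneg_left (hx 0).le (hθpos s').le) haff
    rw [if_pos hbud] at hU
    have hcontra := hNE (π ρ) x π' hord'
    rw [hU, hUz, ← EReal.coe_zero, EReal.coe_le_coe_iff] at hcontra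
    exact absurd hcontra (not_le.2 (mul_pos (hθpos s') (sub_pos.2 (hcv0 (π ρ)))))
  have Dev1 : ∀ x : ℝ, x < c 0 → c 1 < x → c 2 < x →
      (∃ s ∈ bcbAvail θ ca ga 1, θ s * x ≤ B (π ρ)) → False := by
    rintro x hx0 hx1 hx2 ⟨s, hsA, hs⟩
    obtain ⟨π', hord', hπj, hπm⟩ := reord b π hord ρ 1 x
      (fun m hm => by
        rcases fin3cases m with rfl | rfl | rfl
        · rw [← hQ 0, ← hc 0]; exact hx0
        · exact absurd hm (by decide)
        · exact absurd hm (by decide))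
      (fun m hm => by
        rcases fin3cases m with rfl | rfl | rfl
        · exact absurd hm (by decide)
        · rw [← hQ 1, ← hc 1]; exact hx1
        · rw [← hQ 2, ← hc 2]; exact hx2)
    have hp0 : π' 0 = Q 0 := by rw [← e10, hπm 0, ← hQ 0]
    have hp2 : π' 2 = Q 1 := by rw [← e11, hπm 1, ← hQ 1]
    have u0 : rankVal (Function.update b (π ρ) x) π' 0 = ca 0 := by
      rw [rv4.1, hp0, Function.update_of_ne (hQz 0), hca0, hc 0]
    have w0 : rankVal B π' 0 = ga 0 := by rw [rv4.1, hp0, hga0, hg 0]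
    have u1 : rankVal (Function.update b (π ρ) x) π' 1 = x := by
      rw [rv4.2.1, hπj, Function.update_self]
    have w1 : rankVal B π' 1 = B (π ρ) := by rw [rv4.2.1, hπj]
    have u2 : rankVal (Function.update b (π ρ) x) π' 2 = c 1 := by
      rw [rv4.2.2.1, hp2, Function.update_of_ne (hQz 1), hc 1]
    have hpre : bcbAvail θ (rankVal (Function.update b (π ρ) x) π') (rankVal B π') 1 =
        bcbAvail θ ca ga 1 := by
      refine avail_congr (fun m hm => ?_) (fun m hm => ?_)
      · interval_cases m
        exact u0
      · interval_cases m
        exact w0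
    have hFne : ((bcbAvail θ (rankVal (Function.update b (π ρ) x) π') (rankVal B π') 1).filter
        fun s => θ s * rankVal (Function.update b (π ρ) x) π' 1 ≤ rankVal B π' 1).Nonempty := by
      refine ⟨s, Finset.mem_filter.2 ⟨by rw [hpre]; exact hsA, ?_⟩⟩
      rw [u1, w1]
      exact hs
    set s' := ((bcbAvail θ (rankVal (Function.update b (π ρ) x) π') (rankVal B π') 1).filter
        fun s => θ s * rankVal (Function.update b (π ρ) x) π' 1 ≤ rankVal B π' 1).min' hFne
      with hs'def
    have hslot : bcbSlot θ (rankVal (Function.update b (π ρ) x) π') (rankVal B π') 1 =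
        some s' := by
      rw [slot_def, dif_pos hFne]
    have hmin := Finset.min'_mem _ hFne
    rw [← hs'def, Finset.mem_filter] at hmin
    have haff : θ s' * x ≤ B (π ρ) := by
      rw [← u1, ← w1]
      exact hmin.2
    have hsymn : ((π'.symm (π ρ) : Fin 4) : ℕ) = 1 := by
      rw [← hπj, Equiv.symm_apply_apply]
      rfl
    clear_value s'
    have hU := util_some θ v B (Function.update b (π ρ) x) B π' (π ρ) _
      (by rw [hsymn]; exact hslot)
    have upr : rankVal (Function.update b (π ρ) x) π' (((π'.symm (π ρ) : Fin 4) : ℕ) + 1) =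
        c 1 := by
      rw [hsymn]
      exact u2
    rw [upr] at hU
    have hbud : θ s' * c 1 ≤ B (π ρ) :=
      le_trans (mul_le_mul_of_nonneg_left (hx1).le (hθpos s').le) haff
    rw [if_pos hbud] at hU
    have hcontra := hNE (π ρ) x π' hord'
    rw [hU, hUz, ← EReal.coe_zero, EReal.coe_le_coe_iff] at hcontra
    exact absurd hcontra (not_le.2 (mul_pos (hθpos s') (sub_pos.2 (hcv1 (π ρ)))))
  have Dev2 : ∀ x : ℝ, x < c 0 → x < c 1 → c 2 < x →
      (∃ s ∈ bcbAvail θ ca ga 2, θ s * x ≤ B (π ρ)) → False := by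
    rintro x hx0 hx1 hx2 ⟨s, hsA, hs⟩
    obtain ⟨π', hord', hπj, hπm⟩ := reord b π hord ρ 2 x
      (fun m hm => by
        rcases fin3cases m with rfl | rfl | rfl
        · rw [← hQ 0, ← hc 0]; exact hx0
        · rw [← hQ 1, ← hc 1]; exact hx1
        · exact absurd hm (by decide))
      (fun m hm => by
        rcases fin3cases m with rfl | rfl | rfl
        · exact absurd hm (by decide)
        · exact absurd hm (by decide)
        · rw [← hQ 2, ← hc 2]; exact hx2)
    have hp0 : π' 0 = Q 0 := by rw [← e20, hπm 0, ← hQ 0]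
    have hp1 : π' 1 = Q 1 := by rw [← e21, hπm 1, ← hQ 1]
    have hp3 : π' 3 = Q 2 := by rw [← e22, hπm 2, ← hQ 2]
    have u0 : rankVal (Function.update b (π ρ) x) π' 0 = ca 0 := by
      rw [rv4.1, hp0, Function.update_of_ne (hQz 0), hca0, hc 0]
    have w0 : rankVal B π' 0 = ga 0 := by rw [rv4.1, hp0, hga0, hg 0]
    have u1 : rankVal (Function.update b (π ρ) x) π' 1 = ca 1 := by
      rw [rv4.2.1, hp1, Function.update_of_ne (hQz 1), hca1, hc 1]
    have w1 : rankVal B π' 1 = ga 1 := by rw [rv4.2.1, hp1, hga1, hg 1]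
    have u2 : rankVal (Function.update b (π ρ) x) π' 2 = x := by
      rw [rv4.2.2.1, hπj, Function.update_self]
    have w2 : rankVal B π' 2 = B (π ρ) := by rw [rv4.2.2.1, hπj]
    have u3 : rankVal (Function.update b (π ρ) x) π' 3 = c 2 := by
      rw [rv4.2.2.2.1, hp3, Function.update_of_ne (hQz 2), hc 2]
    have hpre : bcbAvail θ (rankVal (Function.update b (π ρ) x) π') (rankVal B π') 2 =
        bcbAvail θ ca ga 2 := by
      refine avail_congr (fun m hm => ?_) (fun m hm => ?_)
      · interval_cases m
        exacts [u0, u1]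
      · interval_cases m
        exacts [w0, w1]
    have hFne : ((bcbAvail θ (rankVal (Function.update b (π ρ) x) π') (rankVal B π') 2).filter
        fun s => θ s * rankVal (Function.update b (π ρ) x) π' 2 ≤ rankVal B π' 2).Nonempty := by
      refine ⟨s, Finset.mem_filter.2 ⟨by rw [hpre]; exact hsA, ?_⟩⟩
      rw [u2, w2]
      exact hs
    set s' := ((bcbAvail θ (rankVal (Function.update b (π ρ) x) π') (rankVal B π') 2).filter
        fun s => θ s * rankVal (Function.update b (π ρ) x) π' 2 ≤ rankVal B π' 2).min' hFne
      with hs'def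
    have hslot : bcbSlot θ (rankVal (Function.update b (π ρ) x) π') (rankVal B π') 2 =
        some s' := by
      rw [slot_def, dif_pos hFne]
    have hmin := Finset.min'_mem _ hFne
    rw [← hs'def, Finset.mem_filter] at hmin
    have haff : θ s' * x ≤ B (π ρ) := by
      rw [← u2, ← w2]
      exact hmin.2
    have hsymn : ((π'.symm (π ρ) : Fin 4) : ℕ) = 2 := by
      rw [← hπj, Equiv.symm_apply_apply]
      rfl
    clear_value s'
    have hU := util_some θ v B (Function.update b (π ρ) x) B π' (π ρ) _
      (by rw [hsymn]; exact hslot)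
    have upr : rankVal (Function.update b (π ρ) x) π' (((π'.symm (π ρ) : Fin 4) : ℕ) + 1) =
        c 2 := by
      rw [hsymn]
      exact u3
    rw [upr] at hU
    have hbud : θ s' * c 2 ≤ B (π ρ) :=
      le_trans (mul_le_mul_of_nonneg_left (hx2).le (hθpos s').le) haff
    rw [if_pos hbud] at hU
    have hcontra := hNE (π ρ) x π' hord'
    rw [hU, hUz, ← EReal.coe_zero, EReal.coe_le_coe_iff] at hcontra
    exact absurd hcontra (not_le.2 (mul_pos (hθpos s') (sub_pos.2 (hcv2 (π ρ)))))
  -- ===== S8: lower bounds on the others' bids =====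
  have hxle : ∀ (s : Fin 3) (x : ℝ), x < B (π ρ) / θ s → θ s * x ≤ B (π ρ) := by
    intro s x hx
    have := (lt_div_iff₀ (hθpos s)).1 hx
    linarith
  have hdlt : ∀ (s : Fin 3) (y : ℝ), θ s * y < B (π ρ) → y < B (π ρ) / θ s := by
    intro s y h
    rw [lt_div_iff₀ (hθpos s)]
    linarith
  have DI0 : ∀ s : Fin 3, B (π ρ) ≤ θ s * c 0 := by
    intro s
    by_contra hcon
    push_neg at hcon
    have h1 := hdlt s (c 0) hcon
    refine Dev0 ((c 0 + B (π ρ) / θ s) / 2) (fun m => ?_) ⟨s, hxle s _ (by linarith)⟩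
    rcases fin3cases m with rfl | rfl | rfl
    · linarith
    · have := pairLe 0 1 (by decide)
      linarith
    · have := pairLe 0 2 (by decide)
      linarith
  have DI1 : ∀ s ∈ bcbAvail θ ca ga 1, B (π ρ) ≤ θ s * c 1 := by
    intro s hsA
    by_contra hcon
    push_neg at hcon
    have h1 := hdlt s (c 1) hcon
    rcases lt_or_ge (c 1) (c 0) with hlt | hle
    · have hmin1 : c 1 < min (B (π ρ) / θ s) (c 0) := lt_min h1 hlt
      refine Dev1 ((c 1 + min (B (π ρ) / θ s) (c 0)) / 2) ?_ (by linarith) ?_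
        ⟨s, hsA, hxle s _ ?_⟩
      · have := min_le_right (B (π ρ) / θ s) (c 0)
        linarith
      · have := pairLe 1 2 (by decide)
        linarith
      · have := min_le_left (B (π ρ) / θ s) (c 0)
        linarith
    · have he : c 0 = c 1 := le_antisymm hle (pairLe 0 1 (by decide))
      have h1' : c 0 < B (π ρ) / θ s := by rw [he]; exact h1
      refine Dev0 ((c 0 + B (π ρ) / θ s) / 2) (fun m => ?_) ⟨s, hxle s _ (by linarith)⟩
      rcases fin3cases m with rfl | rfl | rfl
      · linarith
      · have := pairLe 0 1 (by decide)
        linarith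
      · have := pairLe 0 2 (by decide)
        linarith
  have DI2 : ∀ s ∈ bcbAvail θ ca ga 2, B (π ρ) ≤ θ s * c 2 := by
    intro s hsA
    by_contra hcon
    push_neg at hcon
    have h1 := hdlt s (c 2) hcon
    have hsA1 : s ∈ bcbAvail θ ca ga 1 := by
      rw [hA2e] at hsA
      rw [hA1e]
      exact Finset.mem_of_mem_erase hsA
    rcases lt_or_ge (c 2) (c 1) with hlt | hle
    · have hmin1 : c 2 < min (B (π ρ) / θ s) (c 1) := lt_min h1 hlt
      have hm1 := min_le_right (B (π ρ) / θ s) (c 1)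
      have hm2 := min_le_left (B (π ρ) / θ s) (c 1)
      have h01 := pairLe 0 1 (by decide)
      refine Dev2 ((c 2 + min (B (π ρ) / θ s) (c 1)) / 2) (by linarith) (by linarith)
        (by linarith) ⟨s, hsA, hxle s _ (by linarith)⟩
    · have he : c 1 = c 2 := le_antisymm hle (pairLe 1 2 (by decide))
      have h1' : c 1 < B (π ρ) / θ s := by rw [he]; exact h1
      rcases lt_or_ge (c 1) (c 0) with hlt' | hle'
      · have hmin1 : c 1 < min (B (π ρ) / θ s) (c 0) := lt_min h1' hlt'
        have hm1 := min_le_right (B (π ρ) / θ s) (c 0)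
        have hm2 := min_le_left (B (π ρ) / θ s) (c 0)
        refine Dev1 ((c 1 + min (B (π ρ) / θ s) (c 0)) / 2) (by linarith) (by linarith)
          (by linarith) ⟨s, hsA1, hxle s _ (by linarith)⟩
      · have he' : c 0 = c 1 := le_antisymm hle' (pairLe 0 1 (by decide))
        have h1'' : c 0 < B (π ρ) / θ s := by rw [he']; exact h1'
        refine Dev0 ((c 0 + B (π ρ) / θ s) / 2) (fun m => ?_) ⟨s, hxle s _ (by linarith)⟩
        rcases fin3cases m with rfl | rfl | rfl
        · linarith
        · linarith
        · have := pairLe 0 2 (by decide)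
          linarith

  -- ===== S9: the alone-run assignment is (2,1,0) =====
  have hσ0 : σ0 = 2 := by
    rcases fin3cases σ0 with h | h | h
    · exfalso
      rw [h] at aff0
      have d2 := DI0 2
      linarith [mul_le_mul_of_nonneg_right (le_trans aff0 (hgB0 0)) hθ2.le,
        mul_le_mul_of_nonneg_right (le_trans hB3z d2) hθ0.le, K3]
    · exfalso
      rw [h] at aff0
      have d2 := DI0 2
      linarith [mul_le_mul_of_nonneg_right (le_trans aff0 (hgB0 0)) hθ2.le,
        mul_le_mul_of_nonneg_right (le_trans hB3z d2) hθ1.le, K2]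
    · exact h
  subst hσ0
  have hA1f : bcbAvail θ ca ga 1 = ({0, 1} : Finset (Fin 3)) := by
    rw [hA1e]
    decide
  have hσ1 : σ1 = 1 := by
    rcases fin3cases σ1 with h | h | h
    · exfalso
      rw [h] at aff1 hA2e
      have hmem21 : (1 : Fin 3) ∈ bcbAvail θ ca ga 2 := by
        rw [hA2e]
        decide
      have d21 := DI2 1 hmem21
      have hc21 : B 3 ≤ θ 1 * c 1 :=
        le_trans (le_trans hB3z d21)
          (mul_le_mul_of_nonneg_left (pairLe 1 2 (by decide)) hθ1.le)
      linarith [mul_le_mul_of_nonneg_right (le_trans aff1 (hgB0 1)) hθ1.le,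
        mul_le_mul_of_nonneg_right hc21 hθ0.le, K1]
    · exact h
    · exfalso
      rw [h, hA1f] at mem1
      exact absurd mem1 (by decide)
  subst hσ1
  have hA2f : bcbAvail θ ca ga 2 = ({0} : Finset (Fin 3)) := by
    rw [hA2e]
    decide
  have hσ2 : σ2 = 0 := by
    rcases fin3cases σ2 with h | h | h
    · exact h
    · exfalso
      rw [h, hA2f] at mem2
      exact absurd mem2 (by decide)
    · exfalso
      rw [h, hA2f] at mem2
      exact absurd mem2 (by decide)
  subst hσ2
  have n00 : ¬ (θ 0 * c 0 ≤ gQ 0) := fun hcon =>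
    absurd (min0 0 (by rw [avail_zero]; exact Finset.mem_univ 0) hcon) (by decide)
  have n01 : ¬ (θ 1 * c 0 ≤ gQ 0) := fun hcon =>
    absurd (min0 1 (by rw [avail_zero]; exact Finset.mem_univ 1) hcon) (by decide)
  have n10 : ¬ (θ 0 * c 1 ≤ gQ 1) := fun hcon =>
    absurd (min1 0 (by rw [hA1f]; decide) hcon) (by decide)
  have D0 : B (π ρ) ≤ θ 2 * c 0 := DI0 2
  have D1 : B (π ρ) ≤ θ 1 * c 1 := DI1 1 (by rw [hA1f]; decide)
  have D2 : B (π ρ) ≤ θ 0 * c 2 := DI2 0 (by rw [hA2f]; decide)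
  have SB : ∀ m : Fin 3, B (π ρ) < gQ m := by
    intro m
    have hle : B (π ρ) ≤ gQ m := by
      rcases fin3cases m with rfl | rfl | rfl
      · exact le_trans D0 aff0
      · exact le_trans D1 aff1
      · exact le_trans D2 aff2
    rcases lt_or_eq_of_le hle with h | h
    · exact h
    · exact absurd (hB.injective (by rw [hg m] at h; exact h)).symm (hQz m)
  have hc0pos : 0 < c 0 := by
    rcases le_or_gt (c 0) 0 with h | h
    · exact absurd (le_trans D0 (mul_nonpos_of_nonneg_of_nonpos (hθpos _).le h))
        (not_le.2 (hBpos (π ρ)))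
    · exact h
  have hc1pos : 0 < c 1 := by
    rcases le_or_gt (c 1) 0 with h | h
    · exact absurd (le_trans D1 (mul_nonpos_of_nonneg_of_nonpos (hθpos _).le h))
        (not_le.2 (hBpos (π ρ)))
    · exact h
  have hc2pos : 0 < c 2 := by
    rcases le_or_gt (c 2) 0 with h | h
    · exact absurd (le_trans D2 (mul_nonpos_of_nonneg_of_nonpos (hθpos _).le h))
        (not_le.2 (hBpos (π ρ)))
    · exact h
  -- ===== S10: deviation A (top player grabs slot 1 at the same price) =====
  have hneπ0 : ∀ r' : Fin 4, r' ≠ 0 → π r' ≠ π 0 := fun r' h e => h (π.injective e)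
  have Adev : π 0 = Q 0 → π 1 = Q 1 → (∀ r' : Fin 4, r' ≠ 0 → b (π r') ≤ c 1) →
      gQ 0 ≤ θ 1 * c 1 := by
    intro hπ0 hπ1 hle
    by_contra hcon
    push_neg at hcon
    have hdiv : c 1 < gQ 0 / θ 1 := by
      rw [lt_div_iff₀ hθ1]
      linarith
    have hx1 : c 1 < (c 1 + gQ 0 / θ 1) / 2 := by linarith
    have hx2 : θ 1 * ((c 1 + gQ 0 / θ 1) / 2) ≤ gQ 0 := by
      have h2 : (c 1 + gQ 0 / θ 1) / 2 < gQ 0 / θ 1 := by linarith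
      have := (lt_div_iff₀ hθ1).1 h2
      linarith
    obtain ⟨π', hord', hπj, hπm⟩ := reord b π hord 0 0 ((c 1 + gQ 0 / θ 1) / 2)
      (fun m hm => absurd hm (Fin.not_lt_zero _))
      (fun m _ => by
        rcases fin3cases m with rfl | rfl | rfl
        · rw [e00]; exact lt_of_le_of_lt (hle 1 (by decide)) hx1
        · rw [e01]; exact lt_of_le_of_lt (hle 2 (by decide)) hx1
        · rw [e02]; exact lt_of_le_of_lt (hle 3 (by decide)) hx1)
    have hp1 : π' 1 = π 1 := by rw [← e00, hπm 0, e00]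
    have u0 : rankVal (Function.update b (π 0) ((c 1 + gQ 0 / θ 1) / 2)) π' 0 =
        (c 1 + gQ 0 / θ 1) / 2 := by
      rw [rv4.1, hπj, Function.update_self]
    have w0 : rankVal B π' 0 = gQ 0 := by rw [rv4.1, hπj, hπ0, hg 0]
    have u1 : rankVal (Function.update b (π 0) ((c 1 + gQ 0 / θ 1) / 2)) π' 1 = c 1 := by
      rw [rv4.2.1, hp1, Function.update_of_ne (hneπ0 1 (by decide)), hπ1, hc 1]
    have hslot : bcbSlot θ (rankVal (Function.update b (π 0) ((c 1 + gQ 0 / θ 1) / 2)) π')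
        (rankVal B π') 0 = some 1 := by
      refine slot_eq_some (by rw [avail_zero]; exact Finset.mem_univ 1)
        (by rw [u0, w0]; exact hx2) ?_
      intro s' hs' havs
      rw [u0, w0] at havs
      rcases fin3cases s' with rfl | rfl | rfl
      · exfalso
        have f1 := mul_le_mul_of_nonneg_left havs hθ1.le
        have f2 := mul_le_mul_of_nonneg_left (hgB0 0) hθ1.le
        have f4 := mul_le_mul_of_nonneg_left hB3z hθ0.le
        have f5 := mul_le_mul_of_nonneg_left D1 hθ0.le
        have f6 := mul_lt_mul_of_pos_left hx1 (mul_pos hθ0 hθ1)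
        linarith only [f1, f2, f4, f5, f6, K1]
      · exact le_refl 1
      · exact (by decide : (1:Fin 3) ≤ 2)
    have hsymn : ((π'.symm (π 0) : Fin 4) : ℕ) = 0 := by
      rw [← hπj, Equiv.symm_apply_apply]
      rfl
    have hU := util_some θ v B (Function.update b (π 0) ((c 1 + gQ 0 / θ 1) / 2)) B π' (π 0) 1
      (by rw [hsymn]; exact hslot)
    have upr : rankVal (Function.update b (π 0) ((c 1 + gQ 0 / θ 1) / 2)) π'
        (((π'.symm (π 0) : Fin 4) : ℕ) + 1) = c 1 := by
      rw [hsymn]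
      exact u1
    rw [upr] at hU
    have hbud : θ 1 * c 1 ≤ B (π 0) := by
      rw [hπ0, ← hg 0]
      exact hcon.le
    rw [if_pos hbud] at hU
    -- original utility of the top player
    have hsym0 : ((π.symm (π 0) : Fin 4) : ℕ) = 0 := by
      rw [Equiv.symm_apply_apply]
      rfl
    have horigslot : bcbSlot θ (rankVal b π) (rankVal B π) 0 = some 2 := by
      rw [slot_congr (rb' := ca) (rg' := ga) ?_ ?_]
      · exact hσ0s
      · intro m hm
        interval_cases m
        rw [rv4.1, hπ0, hca0, hc 0]
      · intro m hm
        interval_cases m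
        rw [rv4.1, hπ0, hga0, hg 0]
    have hUo := util_some θ v B b B π (π 0) 2 (by rw [hsym0]; exact horigslot)
    have uor : rankVal b π (((π.symm (π 0) : Fin 4) : ℕ) + 1) = c 1 := by
      rw [hsym0]
      show rankVal b π 1 = c 1
      rw [rv4.2.1, hπ1, hc 1]
    rw [uor] at hUo
    have hbudo : θ 2 * c 1 ≤ B (π 0) := by
      rw [hπ0, ← hg 0]
      exact le_trans (mul_le_mul_of_nonneg_left (pairLe 0 1 (by decide)) hθ2.le) aff0
    rw [if_pos hbudo] at hUo
    have hcontra := hNE (π 0) ((c 1 + gQ 0 / θ 1) / 2) π' hord'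
    rw [hU, hUo, EReal.coe_le_coe_iff] at hcontra
    exact absurd hcontra
      (not_le.2 (mul_lt_mul_of_pos_right hθ12 (sub_pos.2 (hcv1 (π 0)))))

  -- ===== S11: deviation F (top player undercuts to rank 1) =====
  have Fdev : ∀ p2 : ℝ, π 0 = Q 0 → π 1 = Q 1 → b (π 2) = p2 → p2 < c 1 →
      b (π 3) < (p2 + c 1) / 2 → p2 < v (Q 0) → False := by
    intro p2 hπ0 hπ1 hrp2 hpc hb3 hpv
    have hx1 : p2 < (p2 + c 1) / 2 := by linarith
    have hx2 : (p2 + c 1) / 2 < c 1 := by linarith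
    obtain ⟨π', hord', hπj, hπm⟩ := reord b π hord 0 1 ((p2 + c 1) / 2)
      (fun m hm => by
        rcases fin3cases m with rfl | rfl | rfl
        · rw [e00, hπ1, ← hc 1]
          exact hx2
        · exact absurd hm (by decide)
        · exact absurd hm (by decide))
      (fun m hm => by
        rcases fin3cases m with rfl | rfl | rfl
        · exact absurd hm (by decide)
        · rw [e01, hrp2]
          exact hx1
        · rw [e02]
          exact hb3)
    have hp0 : π' 0 = π 1 := by
      have h := hπm 0
      rw [e10, e00] at h
      exact h
    have hp2' : π' 2 = π 2 := by
      have h := hπm 1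
      rw [e11, e01] at h
      exact h
    have u0 : rankVal (Function.update b (π 0) ((p2 + c 1) / 2)) π' 0 = c 1 := by
      rw [rv4.1, hp0, Function.update_of_ne (hneπ0 1 (by decide)), hπ1, hc 1]
    have w0 : rankVal B π' 0 = gQ 1 := by rw [rv4.1, hp0, hπ1, hg 1]
    have u1 : rankVal (Function.update b (π 0) ((p2 + c 1) / 2)) π' 1 = (p2 + c 1) / 2 := by
      rw [rv4.2.1, hπj, Function.update_self]
    have w1 : rankVal B π' 1 = B (π 0) := by rw [rv4.2.1, hπj]
    have u2 : rankVal (Function.update b (π 0) ((p2 + c 1) / 2)) π' 2 = p2 := by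
      rw [rv4.2.2.1, hp2', Function.update_of_ne (hneπ0 2 (by decide)), hrp2]
    have hslot0 : bcbSlot θ (rankVal (Function.update b (π 0) ((p2 + c 1) / 2)) π')
        (rankVal B π') 0 = some 1 := by
      refine slot_eq_some (by rw [avail_zero]; exact Finset.mem_univ 1)
        (by rw [u0, w0]; exact aff1) ?_
      intro s' hs' havs
      rw [u0, w0] at havs
      rcases fin3cases s' with rfl | rfl | rfl
      · exact absurd havs n10
      · exact le_refl 1
      · exact (by decide : (1:Fin 3) ≤ 2)
    have hA1' : bcbAvail θ (rankVal (Function.update b (π 0) ((p2 + c 1) / 2)) π')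
        (rankVal B π') 1 = ({0, 2} : Finset (Fin 3)) := by
      rw [avail_succ_of_some hslot0, avail_zero]
      decide
    have haff2x : θ 2 * ((p2 + c 1) / 2) ≤ B (π 0) := by
      have f1 := mul_lt_mul_of_pos_left hx2 (mul_pos hθ1 hθ2)
      have f2 := mul_le_mul_of_nonneg_left aff1 hθ2.le
      have f3 := mul_le_mul_of_nonneg_left (hgB0 1) hθ2.le
      have f5 := mul_le_mul_of_nonneg_left
        (show B 3 ≤ B (π 0) by rw [hπ0, ← hg 0]; exact hB3g 0) hθ1.le
      have h6 : θ 1 * (θ 2 * ((p2 + c 1) / 2)) < θ 1 * B (π 0) := by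
        linarith only [f1, f2, f3, f5, K2]
      exact (lt_of_mul_lt_mul_left h6 hθ1.le).le
    have hFne : ((bcbAvail θ (rankVal (Function.update b (π 0) ((p2 + c 1) / 2)) π')
        (rankVal B π') 1).filter
        fun s => θ s * rankVal (Function.update b (π 0) ((p2 + c 1) / 2)) π' 1
          ≤ rankVal B π' 1).Nonempty := by
      refine ⟨2, Finset.mem_filter.2 ⟨by rw [hA1']; decide, ?_⟩⟩
      rw [u1, w1]
      exact haff2x
    set s' := ((bcbAvail θ (rankVal (Function.update b (π 0) ((p2 + c 1) / 2)) π')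
        (rankVal B π') 1).filter
        fun s => θ s * rankVal (Function.update b (π 0) ((p2 + c 1) / 2)) π' 1
          ≤ rankVal B π' 1).min' hFne with hs'def
    have hslot1 : bcbSlot θ (rankVal (Function.update b (π 0) ((p2 + c 1) / 2)) π')
        (rankVal B π') 1 = some s' := by
      rw [slot_def, dif_pos hFne]
    have hmin := Finset.min'_mem _ hFne
    rw [← hs'def, Finset.mem_filter] at hmin
    have haffs : θ s' * ((p2 + c 1) / 2) ≤ B (π 0) := by
      rw [← u1, ← w1]
      exact hmin.2
    clear_value s'
    have hsymn : ((π'.symm (π 0) : Fin 4) : ℕ) = 1 := by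
      rw [← hπj, Equiv.symm_apply_apply]
      rfl
    have hU := util_some θ v B (Function.update b (π 0) ((p2 + c 1) / 2)) B π' (π 0) s'
      (by rw [hsymn]; exact hslot1)
    have upr : rankVal (Function.update b (π 0) ((p2 + c 1) / 2)) π'
        (((π'.symm (π 0) : Fin 4) : ℕ) + 1) = p2 := by
      rw [hsymn]
      exact u2
    rw [upr] at hU
    have hbud : θ s' * p2 ≤ B (π 0) :=
      le_trans (mul_le_mul_of_nonneg_left hx1.le (hθpos s').le) haffs
    rw [if_pos hbud] at hU
    -- original utility of the top player
    have hsym0 : ((π.symm (π 0) : Fin 4) : ℕ) = 0 := by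
      rw [Equiv.symm_apply_apply]
      rfl
    have horigslot : bcbSlot θ (rankVal b π) (rankVal B π) 0 = some 2 := by
      rw [slot_congr (rb' := ca) (rg' := ga) ?_ ?_]
      · exact hσ0s
      · intro m hm
        interval_cases m
        rw [rv4.1, hπ0, hca0, hc 0]
      · intro m hm
        interval_cases m
        rw [rv4.1, hπ0, hga0, hg 0]
    have hUo := util_some θ v B b B π (π 0) 2 (by rw [hsym0]; exact horigslot)
    have uor : rankVal b π (((π.symm (π 0) : Fin 4) : ℕ) + 1) = c 1 := by
      rw [hsym0]
      show rankVal b π 1 = c 1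
      rw [rv4.2.1, hπ1, hc 1]
    rw [uor] at hUo
    have hbudo : θ 2 * c 1 ≤ B (π 0) := by
      rw [hπ0, ← hg 0]
      exact le_trans (mul_le_mul_of_nonneg_left (pairLe 0 1 (by decide)) hθ2.le) aff0
    rw [if_pos hbudo] at hUo
    have hcontra := hNE (π 0) ((p2 + c 1) / 2) π' hord'
    rw [hU, hUo, EReal.coe_le_coe_iff] at hcontra
    have hpv' : p2 < v (π 0) := by rw [hπ0]; exact hpv
    have g1 := mul_le_mul_of_nonneg_right (hθs2 s') (sub_pos.2 hpv').le
    have g2 := mul_lt_mul_of_pos_left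
      (show v (π 0) - c 1 < v (π 0) - p2 by linarith) hθ2
    linarith only [g1, g2, hcontra]

  -- ===== S12: deviation B, core A : new order [Q 0, z, Q 2, Q 1] =====
  have BdevA : ∀ r1 : Fin 4, π r1 = Q 1 →
      π (r1.succAbove 0) = Q 0 → π (r1.succAbove 1) = π ρ → π (r1.succAbove 2) = Q 2 →
      ¬ (θ 0 * b (π ρ) ≤ B (π ρ)) → ¬ (θ 1 * b (π ρ) ≤ B (π ρ)) →
      bcbSlot θ (rankVal b π) (rankVal B π) ((r1 : Fin 4) : ℕ) = some 1 →
      0 < rankVal b π (((r1 : Fin 4) : ℕ) + 1) → False := by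
    intro r1 hr1 ho0 ho1 ho2 hz0 hz1 horig hppos
    have hne0 : Q 0 ≠ π r1 := fun h => Fin.succAbove_ne r1 0 (π.injective (ho0.trans h))
    have hnez : π ρ ≠ π r1 := fun h => Fin.succAbove_ne r1 1 (π.injective (ho1.trans h))
    have hne2 : Q 2 ≠ π r1 := fun h => Fin.succAbove_ne r1 2 (π.injective (ho2.trans h))
    obtain ⟨π', hord', hπj, hπm⟩ := reord b π hord r1 3 blo
      (fun m _ => hbloB (r1.succAbove m))
      (fun m hm => absurd hm (h3s m))
    have hp0 : π' 0 = Q 0 := by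
      have h := hπm 0
      rw [e30, ho0] at h
      exact h
    have hp1 : π' 1 = π ρ := by
      have h := hπm 1
      rw [e31, ho1] at h
      exact h
    have hp2 : π' 2 = Q 2 := by
      have h := hπm 2
      rw [e32, ho2] at h
      exact h
    have u0 : rankVal (Function.update b (π r1) blo) π' 0 = c 0 := by
      rw [rv4.1, hp0, Function.update_of_ne hne0, hc 0]
    have w0 : rankVal B π' 0 = gQ 0 := by rw [rv4.1, hp0, hg 0]
    have u1 : rankVal (Function.update b (π r1) blo) π' 1 = b (π ρ) := by
      rw [rv4.2.1, hp1, Function.update_of_ne hnez]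
    have w1 : rankVal B π' 1 = B (π ρ) := by rw [rv4.2.1, hp1]
    have u2 : rankVal (Function.update b (π r1) blo) π' 2 = c 2 := by
      rw [rv4.2.2.1, hp2, Function.update_of_ne hne2, hc 2]
    have w2 : rankVal B π' 2 = gQ 2 := by rw [rv4.2.2.1, hp2, hg 2]
    have hslot0 : bcbSlot θ (rankVal (Function.update b (π r1) blo) π') (rankVal B π') 0 =
        some 2 := by
      refine slot_eq_some (by rw [avail_zero]; exact Finset.mem_univ 2)
        (by rw [u0, w0]; exact aff0) ?_
      intro s' hs' havs
      rw [u0, w0] at havs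
      rcases fin3cases s' with rfl | rfl | rfl
      · exact absurd havs n00
      · exact absurd havs n01
      · exact le_refl 2
    have hA1' : bcbAvail θ (rankVal (Function.update b (π r1) blo) π') (rankVal B π') 1 =
        ({0, 1} : Finset (Fin 3)) := by
      rw [avail_succ_of_some hslot0, avail_zero]
      decide
    have hslot1 : bcbSlot θ (rankVal (Function.update b (π r1) blo) π') (rankVal B π') 1 =
        none := by
      rw [slot_none_iff]
      intro s hs
      rw [hA1'] at hs
      rw [u1, w1]
      rcases fin3cases s with rfl | rfl | rfl
      · exact hz0
      · exact hz1
      · exact absurd hs (by decide)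
    have hA2' : bcbAvail θ (rankVal (Function.update b (π r1) blo) π') (rankVal B π') 2 =
        ({0, 1} : Finset (Fin 3)) := by
      rw [avail_succ_of_none hslot1, hA1']
    have hslot2 : bcbSlot θ (rankVal (Function.update b (π r1) blo) π') (rankVal B π') 2 =
        some 0 := by
      refine slot_eq_some (by rw [hA2']; decide) (by rw [u2, w2]; exact aff2) ?_
      intro s' _ _
      exact Fin.zero_le s'
    have hA3' : bcbAvail θ (rankVal (Function.update b (π r1) blo) π') (rankVal B π') 3 =
        ({1} : Finset (Fin 3)) := by
      rw [avail_succ_of_some hslot2, hA2']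
      decide
    have u3 : rankVal (Function.update b (π r1) blo) π' 3 = blo := by
      rw [rv4.2.2.2.1, hπj, Function.update_self]
    have w3 : rankVal B π' 3 = B (π r1) := by rw [rv4.2.2.2.1, hπj]
    have hslot3 : bcbSlot θ (rankVal (Function.update b (π r1) blo) π') (rankVal B π') 3 =
        some 1 := by
      refine slot_eq_some (by rw [hA3']; decide) ?_ ?_
      · rw [u3, w3]
        exact le_of_lt (lt_trans (mul_neg_of_pos_of_neg hθ1 hblo0) (hBpos _))
      · intro s' hs' _
        rw [hA3'] at hs'
        rcases fin3cases s' with rfl | rfl | rfl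
        · exact absurd hs' (by decide)
        · exact le_refl 1
        · exact (by decide : (1:Fin 3) ≤ 2)
    have hsymn : ((π'.symm (π r1) : Fin 4) : ℕ) = 3 := by
      rw [← hπj, Equiv.symm_apply_apply]
      rfl
    have hU := util_some θ v B (Function.update b (π r1) blo) B π' (π r1) 1
      (by rw [hsymn]; exact hslot3)
    have upr : rankVal (Function.update b (π r1) blo) π'
        (((π'.symm (π r1) : Fin 4) : ℕ) + 1) = 0 := by
      rw [hsymn]
      exact rv4.2.2.2.2
    rw [upr] at hU
    have hbud : θ 1 * (0:ℝ) ≤ B (π r1) := by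
      rw [mul_zero]
      exact (hBpos _).le
    rw [if_pos hbud] at hU
    have hsymr : ((π.symm (π r1) : Fin 4) : ℕ) = ((r1 : Fin 4) : ℕ) := by
      rw [Equiv.symm_apply_apply]
    have hUo := util_some θ v B b B π (π r1) 1 (by rw [hsymr]; exact horig)
    rw [hsymr] at hUo
    have hcontra := hNE (π r1) blo π' hord'
    by_cases hbo : θ 1 * rankVal b π (((r1 : Fin 4) : ℕ) + 1) ≤ B (π r1)
    · rw [if_pos hbo] at hUo
      rw [hU, hUo, EReal.coe_le_coe_iff] at hcontra
      have := mul_pos hθ1 hppos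
      linarith only [hcontra, this]
    · rw [if_neg hbo] at hUo
      rw [hU, hUo] at hcontra
      exact not_coe_le_bot _ hcontra

  -- core B : new order [Q 0, Q 2, z, Q 1]
  have BdevB : ∀ r1 : Fin 4, π r1 = Q 1 →
      π (r1.succAbove 0) = Q 0 → π (r1.succAbove 1) = Q 2 → π (r1.succAbove 2) = π ρ →
      ¬ (θ 1 * b (π ρ) ≤ B (π ρ)) →
      bcbSlot θ (rankVal b π) (rankVal B π) ((r1 : Fin 4) : ℕ) = some 1 →
      0 < rankVal b π (((r1 : Fin 4) : ℕ) + 1) → False := by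
    intro r1 hr1 ho0 ho1 ho2 hz1 horig hppos
    have hne0 : Q 0 ≠ π r1 := fun h => Fin.succAbove_ne r1 0 (π.injective (ho0.trans h))
    have hne2 : Q 2 ≠ π r1 := fun h => Fin.succAbove_ne r1 1 (π.injective (ho1.trans h))
    have hnez : π ρ ≠ π r1 := fun h => Fin.succAbove_ne r1 2 (π.injective (ho2.trans h))
    obtain ⟨π', hord', hπj, hπm⟩ := reord b π hord r1 3 blo
      (fun m _ => hbloB (r1.succAbove m))
      (fun m hm => absurd hm (h3s m))
    have hp0 : π' 0 = Q 0 := by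
      have h := hπm 0
      rw [e30, ho0] at h
      exact h
    have hp1 : π' 1 = Q 2 := by
      have h := hπm 1
      rw [e31, ho1] at h
      exact h
    have hp2 : π' 2 = π ρ := by
      have h := hπm 2
      rw [e32, ho2] at h
      exact h
    have u0 : rankVal (Function.update b (π r1) blo) π' 0 = c 0 := by
      rw [rv4.1, hp0, Function.update_of_ne hne0, hc 0]
    have w0 : rankVal B π' 0 = gQ 0 := by rw [rv4.1, hp0, hg 0]
    have u1 : rankVal (Function.update b (π r1) blo) π' 1 = c 2 := by
      rw [rv4.2.1, hp1, Function.update_of_ne hne2, hc 2]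
    have w1 : rankVal B π' 1 = gQ 2 := by rw [rv4.2.1, hp1, hg 2]
    have u2 : rankVal (Function.update b (π r1) blo) π' 2 = b (π ρ) := by
      rw [rv4.2.2.1, hp2, Function.update_of_ne hnez]
    have w2 : rankVal B π' 2 = B (π ρ) := by rw [rv4.2.2.1, hp2]
    have hslot0 : bcbSlot θ (rankVal (Function.update b (π r1) blo) π') (rankVal B π') 0 =
        some 2 := by
      refine slot_eq_some (by rw [avail_zero]; exact Finset.mem_univ 2)
        (by rw [u0, w0]; exact aff0) ?_
      intro s' hs' havs
      rw [u0, w0] at havs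
      rcases fin3cases s' with rfl | rfl | rfl
      · exact absurd havs n00
      · exact absurd havs n01
      · exact le_refl 2
    have hA1' : bcbAvail θ (rankVal (Function.update b (π r1) blo) π') (rankVal B π') 1 =
        ({0, 1} : Finset (Fin 3)) := by
      rw [avail_succ_of_some hslot0, avail_zero]
      decide
    have hslot1 : bcbSlot θ (rankVal (Function.update b (π r1) blo) π') (rankVal B π') 1 =
        some 0 := by
      refine slot_eq_some (by rw [hA1']; decide) (by rw [u1, w1]; exact aff2) ?_
      intro s' _ _
      exact Fin.zero_le s'
    have hA2' : bcbAvail θ (rankVal (Function.update b (π r1) blo) π') (rankVal B π') 2 =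
        ({1} : Finset (Fin 3)) := by
      rw [avail_succ_of_some hslot1, hA1']
      decide
    have hslot2 : bcbSlot θ (rankVal (Function.update b (π r1) blo) π') (rankVal B π') 2 =
        none := by
      rw [slot_none_iff]
      intro s hs
      rw [hA2'] at hs
      rw [u2, w2]
      rcases fin3cases s with rfl | rfl | rfl
      · exact absurd hs (by decide)
      · exact hz1
      · exact absurd hs (by decide)
    have hA3' : bcbAvail θ (rankVal (Function.update b (π r1) blo) π') (rankVal B π') 3 =
        ({1} : Finset (Fin 3)) := by
      rw [avail_succ_of_none hslot2, hA2']
    have u3 : rankVal (Function.update b (π r1) blo) π' 3 = blo := by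
      rw [rv4.2.2.2.1, hπj, Function.update_self]
    have w3 : rankVal B π' 3 = B (π r1) := by rw [rv4.2.2.2.1, hπj]
    have hslot3 : bcbSlot θ (rankVal (Function.update b (π r1) blo) π') (rankVal B π') 3 =
        some 1 := by
      refine slot_eq_some (by rw [hA3']; decide) ?_ ?_
      · rw [u3, w3]
        exact le_of_lt (lt_trans (mul_neg_of_pos_of_neg hθ1 hblo0) (hBpos _))
      · intro s' hs' _
        rw [hA3'] at hs'
        rcases fin3cases s' with rfl | rfl | rfl
        · exact absurd hs' (by decide)
        · exact le_refl 1
        · exact (by decide : (1:Fin 3) ≤ 2)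
    have hsymn : ((π'.symm (π r1) : Fin 4) : ℕ) = 3 := by
      rw [← hπj, Equiv.symm_apply_apply]
      rfl
    have hU := util_some θ v B (Function.update b (π r1) blo) B π' (π r1) 1
      (by rw [hsymn]; exact hslot3)
    have upr : rankVal (Function.update b (π r1) blo) π'
        (((π'.symm (π r1) : Fin 4) : ℕ) + 1) = 0 := by
      rw [hsymn]
      exact rv4.2.2.2.2
    rw [upr] at hU
    have hbud : θ 1 * (0:ℝ) ≤ B (π r1) := by
      rw [mul_zero]
      exact (hBpos _).le
    rw [if_pos hbud] at hU
    have hsymr : ((π.symm (π r1) : Fin 4) : ℕ) = ((r1 : Fin 4) : ℕ) := by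
      rw [Equiv.symm_apply_apply]
    have hUo := util_some θ v B b B π (π r1) 1 (by rw [hsymr]; exact horig)
    rw [hsymr] at hUo
    have hcontra := hNE (π r1) blo π' hord'
    by_cases hbo : θ 1 * rankVal b π (((r1 : Fin 4) : ℕ) + 1) ≤ B (π r1)
    · rw [if_pos hbo] at hUo
      rw [hU, hUo, EReal.coe_le_coe_iff] at hcontra
      have := mul_pos hθ1 hppos
      linarith only [hcontra, this]
    · rw [if_neg hbo] at hUo
      rw [hU, hUo] at hcontra
      exact not_coe_le_bot _ hcontra

  -- core 0 : new order [z, Q 0, Q 2, Q 1]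
  have Bdev0 : ∀ r1 : Fin 4, π r1 = Q 1 →
      π (r1.succAbove 0) = π ρ → π (r1.succAbove 1) = Q 0 → π (r1.succAbove 2) = Q 2 →
      (∀ s : Fin 3, ¬ (θ s * b (π ρ) ≤ B (π ρ))) →
      bcbSlot θ (rankVal b π) (rankVal B π) ((r1 : Fin 4) : ℕ) = some 1 →
      0 < rankVal b π (((r1 : Fin 4) : ℕ) + 1) → False := by
    intro r1 hr1 ho0 ho1 ho2 hzall horig hppos
    have hnez : π ρ ≠ π r1 := fun h => Fin.succAbove_ne r1 0 (π.injective (ho0.trans h))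
    have hne0 : Q 0 ≠ π r1 := fun h => Fin.succAbove_ne r1 1 (π.injective (ho1.trans h))
    have hne2 : Q 2 ≠ π r1 := fun h => Fin.succAbove_ne r1 2 (π.injective (ho2.trans h))
    obtain ⟨π', hord', hπj, hπm⟩ := reord b π hord r1 3 blo
      (fun m _ => hbloB (r1.succAbove m))
      (fun m hm => absurd hm (h3s m))
    have hp0 : π' 0 = π ρ := by
      have h := hπm 0
      rw [e30, ho0] at h
      exact h
    have hp1 : π' 1 = Q 0 := by
      have h := hπm 1
      rw [e31, ho1] at h
      exact h
    have hp2 : π' 2 = Q 2 := by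
      have h := hπm 2
      rw [e32, ho2] at h
      exact h
    have u0 : rankVal (Function.update b (π r1) blo) π' 0 = b (π ρ) := by
      rw [rv4.1, hp0, Function.update_of_ne hnez]
    have w0 : rankVal B π' 0 = B (π ρ) := by rw [rv4.1, hp0]
    have u1 : rankVal (Function.update b (π r1) blo) π' 1 = c 0 := by
      rw [rv4.2.1, hp1, Function.update_of_ne hne0, hc 0]
    have w1 : rankVal B π' 1 = gQ 0 := by rw [rv4.2.1, hp1, hg 0]
    have u2 : rankVal (Function.update b (π r1) blo) π' 2 = c 2 := by
      rw [rv4.2.2.1, hp2, Function.update_of_ne hne2, hc 2]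
    have w2 : rankVal B π' 2 = gQ 2 := by rw [rv4.2.2.1, hp2, hg 2]
    have hslot0 : bcbSlot θ (rankVal (Function.update b (π r1) blo) π') (rankVal B π') 0 =
        none := by
      rw [slot_none_iff]
      intro s hs
      rw [u0, w0]
      exact hzall s
    have hA1' : bcbAvail θ (rankVal (Function.update b (π r1) blo) π') (rankVal B π') 1 =
        Finset.univ := by
      rw [avail_succ_of_none hslot0, avail_zero]
    have hslot1 : bcbSlot θ (rankVal (Function.update b (π r1) blo) π') (rankVal B π') 1 =
        some 2 := by
      refine slot_eq_some (by rw [hA1']; exact Finset.mem_univ 2)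
        (by rw [u1, w1]; exact aff0) ?_
      intro s' hs' havs
      rw [u1, w1] at havs
      rcases fin3cases s' with rfl | rfl | rfl
      · exact absurd havs n00
      · exact absurd havs n01
      · exact le_refl 2
    have hA2' : bcbAvail θ (rankVal (Function.update b (π r1) blo) π') (rankVal B π') 2 =
        ({0, 1} : Finset (Fin 3)) := by
      rw [avail_succ_of_some hslot1, hA1']
      decide
    have hslot2 : bcbSlot θ (rankVal (Function.update b (π r1) blo) π') (rankVal B π') 2 =
        some 0 := by
      refine slot_eq_some (by rw [hA2']; decide) (by rw [u2, w2]; exact aff2) ?_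
      intro s' _ _
      exact Fin.zero_le s'
    have hA3' : bcbAvail θ (rankVal (Function.update b (π r1) blo) π') (rankVal B π') 3 =
        ({1} : Finset (Fin 3)) := by
      rw [avail_succ_of_some hslot2, hA2']
      decide
    have u3 : rankVal (Function.update b (π r1) blo) π' 3 = blo := by
      rw [rv4.2.2.2.1, hπj, Function.update_self]
    have w3 : rankVal B π' 3 = B (π r1) := by rw [rv4.2.2.2.1, hπj]
    have hslot3 : bcbSlot θ (rankVal (Function.update b (π r1) blo) π') (rankVal B π') 3 =
        some 1 := by
      refine slot_eq_some (by rw [hA3']; decide) ?_ ?_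
      · rw [u3, w3]
        exact le_of_lt (lt_trans (mul_neg_of_pos_of_neg hθ1 hblo0) (hBpos _))
      · intro s' hs' _
        rw [hA3'] at hs'
        rcases fin3cases s' with rfl | rfl | rfl
        · exact absurd hs' (by decide)
        · exact le_refl 1
        · exact (by decide : (1:Fin 3) ≤ 2)
    have hsymn : ((π'.symm (π r1) : Fin 4) : ℕ) = 3 := by
      rw [← hπj, Equiv.symm_apply_apply]
      rfl
    have hU := util_some θ v B (Function.update b (π r1) blo) B π' (π r1) 1
      (by rw [hsymn]; exact hslot3)
    have upr : rankVal (Function.update b (π r1) blo) π'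
        (((π'.symm (π r1) : Fin 4) : ℕ) + 1) = 0 := by
      rw [hsymn]
      exact rv4.2.2.2.2
    rw [upr] at hU
    have hbud : θ 1 * (0:ℝ) ≤ B (π r1) := by
      rw [mul_zero]
      exact (hBpos _).le
    rw [if_pos hbud] at hU
    have hsymr : ((π.symm (π r1) : Fin 4) : ℕ) = ((r1 : Fin 4) : ℕ) := by
      rw [Equiv.symm_apply_apply]
    have hUo := util_some θ v B b B π (π r1) 1 (by rw [hsymr]; exact horig)
    rw [hsymr] at hUo
    have hcontra := hNE (π r1) blo π' hord'
    by_cases hbo : θ 1 * rankVal b π (((r1 : Fin 4) : ℕ) + 1) ≤ B (π r1)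
    · rw [if_pos hbo] at hUo
      rw [hU, hUo, EReal.coe_le_coe_iff] at hcontra
      have := mul_pos hθ1 hppos
      linarith only [hcontra, this]
    · rw [if_neg hbo] at hUo
      rw [hU, hUo] at hcontra
      exact not_coe_le_bot _ hcontra

  -- ===== S13: case analysis on the rank of the unassigned player =====
  rcases fin4cases ρ with rfl | rfl | rfl | rfl
  · -- ρ = 0 : the unassigned player is on top
    have hρ0 : bcbSlot θ (rankVal b π) (rankVal B π) 0 = none := hρ
    have hπ1Q : π 1 = Q 0 := by rw [hQ 0, e00]
    have hπ2Q : π 2 = Q 1 := by rw [hQ 1, e01]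
    have hπ3Q : π 3 = Q 2 := by rw [hQ 2, e02]
    have hzall : ∀ s : Fin 3, ¬ (θ s * b (π 0) ≤ B (π 0)) := by
      intro s
      have h := slot_none_iff.1 hρ0 s (by rw [avail_zero]; exact Finset.mem_univ s)
      rw [rv4.1, rv4.1] at h
      exact h
    have hu1 : rankVal b π 1 = c 0 := by rw [rv4.2.1, hπ1Q, hc 0]
    have hw1 : rankVal B π 1 = gQ 0 := by rw [rv4.2.1, hπ1Q, hg 0]
    have hu2 : rankVal b π 2 = c 1 := by rw [rv4.2.2.1, hπ2Q, hc 1]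
    have hw2 : rankVal B π 2 = gQ 1 := by rw [rv4.2.2.1, hπ2Q, hg 1]
    have hu3 : rankVal b π 3 = c 2 := by rw [rv4.2.2.2.1, hπ3Q, hc 2]
    have hoA1 : bcbAvail θ (rankVal b π) (rankVal B π) 1 = Finset.univ := by
      rw [avail_succ_of_none hρ0, avail_zero]
    have hoslot1 : bcbSlot θ (rankVal b π) (rankVal B π) 1 = some 2 := by
      refine slot_eq_some (by rw [hoA1]; exact Finset.mem_univ 2)
        (by rw [hu1, hw1]; exact aff0) ?_
      intro s' hs' havs
      rw [hu1, hw1] at havs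
      rcases fin3cases s' with rfl | rfl | rfl
      · exact absurd havs n00
      · exact absurd havs n01
      · exact le_refl 2
    have hoA2 : bcbAvail θ (rankVal b π) (rankVal B π) 2 = ({0, 1} : Finset (Fin 3)) := by
      rw [avail_succ_of_some hoslot1, hoA1]
      decide
    have hoslot2 : bcbSlot θ (rankVal b π) (rankVal B π) 2 = some 1 := by
      refine slot_eq_some (by rw [hoA2]; decide) (by rw [hu2, hw2]; exact aff1) ?_
      intro s' hs' havs
      rw [hu2, hw2] at havs
      rcases fin3cases s' with rfl | rfl | rfl
      · exact absurd havs n10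
      · exact le_refl 1
      · rw [hoA2] at hs'
        exact absurd hs' (by decide)
    exact Bdev0 2 hπ2Q (by rw [e20]) (by rw [e21]; exact hπ1Q) (by rw [e22]; exact hπ3Q)
      hzall hoslot2 (by show 0 < rankVal b π 3; rw [hu3]; exact hc2pos)
  · -- ρ = 1
    have hρ1 : bcbSlot θ (rankVal b π) (rankVal B π) 1 = none := hρ
    have hπ0Q : π 0 = Q 0 := by rw [hQ 0, e10]
    have hπ2Q : π 2 = Q 1 := by rw [hQ 1, e11]
    have hπ3Q : π 3 = Q 2 := by rw [hQ 2, e12]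
    have hu0 : rankVal b π 0 = c 0 := by rw [rv4.1, hπ0Q, hc 0]
    have hw0 : rankVal B π 0 = gQ 0 := by rw [rv4.1, hπ0Q, hg 0]
    have hu2 : rankVal b π 2 = c 1 := by rw [rv4.2.2.1, hπ2Q, hc 1]
    have hw2 : rankVal B π 2 = gQ 1 := by rw [rv4.2.2.1, hπ2Q, hg 1]
    have hu3 : rankVal b π 3 = c 2 := by rw [rv4.2.2.2.1, hπ3Q, hc 2]
    have hoslot0 : bcbSlot θ (rankVal b π) (rankVal B π) 0 = some 2 := by
      refine slot_eq_some (by rw [avail_zero]; exact Finset.mem_univ 2)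
        (by rw [hu0, hw0]; exact aff0) ?_
      intro s' hs' havs
      rw [hu0, hw0] at havs
      rcases fin3cases s' with rfl | rfl | rfl
      · exact absurd havs n00
      · exact absurd havs n01
      · exact le_refl 2
    have hoA1 : bcbAvail θ (rankVal b π) (rankVal B π) 1 = ({0, 1} : Finset (Fin 3)) := by
      rw [avail_succ_of_some hoslot0, avail_zero]
      decide
    have hz0 : ¬ (θ 0 * b (π 1) ≤ B (π 1)) := by
      have h := slot_none_iff.1 hρ1 0 (by rw [hoA1]; decide)
      rw [rv4.2.1, rv4.2.1] at h
      exact h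
    have hz1 : ¬ (θ 1 * b (π 1) ≤ B (π 1)) := by
      have h := slot_none_iff.1 hρ1 1 (by rw [hoA1]; decide)
      rw [rv4.2.1, rv4.2.1] at h
      exact h
    have hoA2 : bcbAvail θ (rankVal b π) (rankVal B π) 2 = ({0, 1} : Finset (Fin 3)) := by
      rw [avail_succ_of_none hρ1, hoA1]
    have hoslot2 : bcbSlot θ (rankVal b π) (rankVal B π) 2 = some 1 := by
      refine slot_eq_some (by rw [hoA2]; decide) (by rw [hu2, hw2]; exact aff1) ?_
      intro s' hs' havs
      rw [hu2, hw2] at havs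
      rcases fin3cases s' with rfl | rfl | rfl
      · exact absurd havs n10
      · exact le_refl 1
      · rw [hoA2] at hs'
        exact absurd hs' (by decide)
    exact BdevA 2 hπ2Q (by rw [e20]; exact hπ0Q) (by rw [e21]) (by rw [e22]; exact hπ3Q)
      hz0 hz1 hoslot2 (by show 0 < rankVal b π 3; rw [hu3]; exact hc2pos)
  · -- ρ = 2
    have hρ2 : bcbSlot θ (rankVal b π) (rankVal B π) 2 = none := hρ
    have hπ0Q : π 0 = Q 0 := by rw [hQ 0, e20]
    have hπ1Q : π 1 = Q 1 := by rw [hQ 1, e21]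
    have hπ3Q : π 3 = Q 2 := by rw [hQ 2, e22]
    have hcongu : ∀ m ≤ 1, rankVal b π m = ca m := by
      intro m hm
      interval_cases m
      · rw [rv4.1, hπ0Q, hca0, hc 0]
      · rw [rv4.2.1, hπ1Q, hca1, hc 1]
    have hcongw : ∀ m ≤ 1, rankVal B π m = ga m := by
      intro m hm
      interval_cases m
      · rw [rv4.1, hπ0Q, hga0, hg 0]
      · rw [rv4.2.1, hπ1Q, hga1, hg 1]
    have hoslot1 : bcbSlot θ (rankVal b π) (rankVal B π) 1 = some 1 := by
      rw [slot_congr hcongu hcongw]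
      exact hσ1s
    have hoA2 : bcbAvail θ (rankVal b π) (rankVal B π) 2 = ({0} : Finset (Fin 3)) := by
      rw [avail_congr (fun m hm => hcongu m (by omega)) (fun m hm => hcongw m (by omega)), hA2f]
    have hz0 : ¬ (θ 0 * b (π 2) ≤ B (π 2)) := by
      have h := slot_none_iff.1 hρ2 0 (by rw [hoA2]; decide)
      rw [rv4.2.2.1, rv4.2.2.1] at h
      exact h
    by_cases hd : θ 1 * b (π 2) ≤ B (π 2)
    · -- Adev and Fdev
      have hle : ∀ r' : Fin 4, r' ≠ 0 → b (π r') ≤ c 1 := by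
        intro r' hr'
        rcases fin4cases r' with rfl | rfl | rfl | rfl
        · exact absurd rfl hr'
        · rw [hπ1Q, ← hc 1]
        · exact le_of_mul_le_mul_left (le_trans hd D1) hθ1
        · rw [hπ3Q, ← hc 2]
          exact pairLe 1 2 (by decide)
      have hA := Adev hπ0Q hπ1Q hle
      have hdlt1 : b (π 2) < c 1 := by
        have h1 : θ 1 * b (π 2) < θ 1 * c 1 := lt_of_le_of_lt hd (lt_of_lt_of_le (SB 0) hA)
        exact lt_of_mul_lt_mul_left h1 hθ1.le
      have hd2 : c 2 < b (π 2) := by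
        rcases hord 2 3 (by decide) with h | ⟨h, hpr⟩
        · rw [hπ3Q, ← hc 2] at h
          exact h
        · exfalso
          have hQlt : Q 2 < π 2 := hB.lt_iff_gt.1 (by rw [← hg 2]; exact SB 2)
          rw [hπ3Q] at hpr
          simp only [] at hpr
          have h2 : ((Q 2 : Fin 4) : ℕ) < ((π 2 : Fin 4) : ℕ) := hQlt
          omega
      have hb3' : b (π 3) < (b (π 2) + c 1) / 2 := by
        rw [hπ3Q, ← hc 2]
        linarith
      have hpv : b (π 2) < v (Q 0) := by
        have g1 := Kv (Q 0)
        have g2 := mul_le_mul_of_nonneg_left hθ12.le (Kvpos (Q 0)).le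
        have h1 : θ 1 * b (π 2) < θ 1 * v (Q 0) := by
          linarith only [hd, hBz0, g1, g2]
        exact lt_of_mul_lt_mul_left h1 hθ1.le
      exact Fdev (b (π 2)) hπ0Q hπ1Q rfl hdlt1 hb3' hpv
    · have hdpos : 0 < b (π 2) := by
        by_contra hle
        push_neg at hle
        exact hd (le_trans (mul_nonpos_of_nonneg_of_nonpos hθ1.le hle) (hBpos _).le)
      exact BdevA 1 hπ1Q (by rw [e10]; exact hπ0Q) (by rw [e11]) (by rw [e12]; exact hπ3Q)
        hz0 hd hoslot1 (by show 0 < rankVal b π 2; rw [rv4.2.2.1]; exact hdpos)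
  · -- ρ = 3
    have hπ0Q : π 0 = Q 0 := by rw [hQ 0, e30]
    have hπ1Q : π 1 = Q 1 := by rw [hQ 1, e31]
    have hπ2Q : π 2 = Q 2 := by rw [hQ 2, e32]
    have hcongu : ∀ m ≤ 1, rankVal b π m = ca m := by
      intro m hm
      interval_cases m
      · rw [rv4.1, hπ0Q, hca0, hc 0]
      · rw [rv4.2.1, hπ1Q, hca1, hc 1]
    have hcongw : ∀ m ≤ 1, rankVal B π m = ga m := by
      intro m hm
      interval_cases m
      · rw [rv4.1, hπ0Q, hga0, hg 0]
      · rw [rv4.2.1, hπ1Q, hga1, hg 1]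
    have hoslot1 : bcbSlot θ (rankVal b π) (rankVal B π) 1 = some 1 := by
      rw [slot_congr hcongu hcongw]
      exact hσ1s
    by_cases hd : θ 1 * b (π 3) ≤ B (π 3)
    · have hle : ∀ r' : Fin 4, r' ≠ 0 → b (π r') ≤ c 1 := by
        intro r' hr'
        rcases fin4cases r' with rfl | rfl | rfl | rfl
        · exact absurd rfl hr'
        · rw [hπ1Q, ← hc 1]
        · rw [hπ2Q, ← hc 2]
          exact pairLe 1 2 (by decide)
        · exact le_of_mul_le_mul_left (le_trans hd D1) hθ1
      have hA := Adev hπ0Q hπ1Q hle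
      have hc2c1 : c 2 < c 1 := by
        by_contra hge
        push_neg at hge
        have f1 := mul_le_mul_of_nonneg_right (le_trans aff2 (hgB0 2)) hθ1.le
        have f2 := mul_le_mul_of_nonneg_left (le_trans hB3z D1) hθ0.le
        have f3 := mul_le_mul_of_nonneg_left hge (mul_pos hθ0 hθ1).le
        linarith only [f1, f2, f3, K1]
      have hd23 : b (π 3) ≤ c 2 := by
        rcases hord 2 3 (by decide) with h | ⟨h, _⟩
        · rw [hπ2Q, ← hc 2] at h
          exact h.le
        · rw [hπ2Q, ← hc 2] at h
          exact le_of_eq h.symm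
      have hb3' : b (π 3) < (c 2 + c 1) / 2 := by linarith
      have hrp2 : b (π 2) = c 2 := by rw [hπ2Q, ← hc 2]
      exact Fdev (c 2) hπ0Q hπ1Q hrp2 hc2c1 hb3' (hcv2 (Q 0))
    · exact BdevB 1 hπ1Q (by rw [e10]; exact hπ0Q) (by rw [e11]; exact hπ2Q) (by rw [e12])
        hd hoslot1 (by show 0 < rankVal b π 2; rw [rv4.2.2.1, hπ2Q, ← hc 2]; exact hc2pos)
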